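/- If a SEM M contains a cycle of dependencies among endogenous variables V_1, …, V_k (V_{i+1} is not independent of V_i for i = 1, …, k−1 and V_1 is not independent of V_k), then M falsifies an instance of the recursiveness axiom D6; consequently, every SEM in which all instances of D6 are valid is acyclic. -/

import Mathlib

namespace Causal

/-- An outcome assigns a value to every endogenous variable. -/
abbrev Outcome (V : Type) (R : V → Type) := ∀ v, R v

/-- An intervention is a partial assignment of values to endogenous variables. -/
abbrev Intv (V : Type) (R : V → Type) := ∀ v, Option (R v)

/-- The set of variables targeted by an intervention. -/
def dom {V : Type} {R : V → Type} (I : Intv V R) : Set V := {v | I v ≠ none}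

/-- An outcome agrees with an intervention on its domain. -/
def consistent {V : Type} {R : V → Type} (I : Intv V R) (o : Outcome V R) : Prop :=
  ∀ v a, I v = some a → o v = a

/-- Composition of interventions: the second intervention overrides the first. -/
def comp {V : Type} {R : V → Type} (I J : Intv V R) : Intv V R :=
  fun v => (J v).orElse (fun _ => I v)

/-- A causal model maps contexts and interventions to sets of outcomes. -/
abbrev CModel (Ctx V : Type) (R : V → Type) := Ctx → Intv V R → Set (Outcome V R)

/-- A structural-equations model: each endogenous variable `X` has a structural
equation determining its value from the context and the values of the other variables. -/
structure SEM (Ctx V : Type) (R : V → Type) where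
  F : ∀ X : V, Ctx → (∀ Y, Y ≠ X → R Y) → R X

/-- Outcomes of a SEM under a context and intervention: solutions of the structural
equations, where intervened variables instead take their prescribed values. -/
def SEM.outcomes {Ctx V : Type} {R : V → Type} (M : SEM Ctx V R) (u : Ctx)
    (I : Intv V R) : Set (Outcome V R) :=
  {o | ∀ X, match I X with
    | some a => o X = a
    | none => o X = M.F X u (fun Y _ => o Y)}

/-- Extend an intervention by additionally setting variable `X` to `a`
(overriding any previous value for `X`). -/
def setVar {V : Type} {R : V → Type} [DecidableEq V] (I : Intv V R) (X : V) (a : R X) :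
    Intv V R :=
  fun v => if h : v = X then some (cast (show R X = R v by rw [h]) a) else I v

/-- `Indep M u X Y`: the structural equation for `X` does not depend on `Y`
in context `u`. -/
def Indep {Ctx V : Type} {R : V → Type} (M : SEM Ctx V R) (u : Ctx) (X Y : V) : Prop :=
  ∀ (w w' : ∀ Z, Z ≠ X → R Z), (∀ Z hZ, Z ≠ Y → w Z hZ = w' Z hZ) →
    M.F X u w = M.F X u w'

/-- A SEM is acyclic (recursive) if for each context there is a strict total
order on the endogenous variables such that each equation is independent of
all variables above it in the order. -/
def SEM.Acyclic {Ctx V : Type} {R : V → Type} (M : SEM Ctx V R) : Prop :=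
  ∀ u : Ctx, ∃ r : V → V → Prop, IsStrictTotalOrder V r ∧
    ∀ X Y : V, r X Y → Indep M u X Y

/-- `Affects M u Y Z` (`Y ⇝ Z`): there is an intervention `I` and a value `y`
for `Y` such that additionally setting `Y ← y` changes the value of `Z`:
`[I](Z = z)` and `[I; Y ← y](Z = z')` for some `z ≠ z'`. -/
def Affects {Ctx V : Type} {R : V → Type} [DecidableEq V]
    (M : CModel Ctx V R) (u : Ctx) (Y Z : V) : Prop :=
  ∃ (I : Intv V R) (y : R Y) (z z' : R Z), z ≠ z' ∧
    (∀ o ∈ M u I, o Z = z) ∧ (∀ o ∈ M u (setVar I Y y), o Z = z')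

/-- Semantic validity of the recursiveness axiom D6: there are no
`⇝`-cycles. -/
def D6holds {Ctx V : Type} {R : V → Type} [DecidableEq V] (M : CModel Ctx V R) : Prop :=
  ∀ (u : Ctx) (k : ℕ) (X : Fin (k + 1) → V),
    (∀ i : Fin k, Affects M u (X i.castSucc) (X i.succ)) →
    ¬ Affects M u (X (Fin.last k)) (X 0)

theorem affects_of_not_indep {Ctx V : Type} {R : V → Type} [DecidableEq V]
    (M : SEM Ctx V R) (u : Ctx) (X Y : V) (h : ¬ Indep M u X Y) :
    Affects (fun u I => M.outcomes u I) u Y X := by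
  have hYX : Y ≠ X := by
    rintro rfl
    exact h (fun w w' hw => by
      have : w = w' := by funext Z hZ; exact hw Z hZ hZ
      rw [this])
  simp only [Indep, not_forall] at h
  obtain ⟨w, w', hw, hne⟩ := h
  refine ⟨fun v => if hv : v = X then none else some (w v hv), w' Y hYX,
    M.F X u w, M.F X u w', hne, ?_, ?_⟩
  · intro o ho
    have hov : ∀ v (hv : v ≠ X), o v = w v hv := by
      intro v hv
      have := ho v
      simp only [dif_neg hv] at this
      exact this
    have hX := ho X
    simp only [dif_pos rfl] at hX
    rw [hX]
    congr 1
    funext Z hZ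
    exact hov Z hZ
  · intro o ho
    have hoY : o Y = w' Y hYX := by
      have := ho Y
      simp only [setVar, dif_pos rfl] at this
      simpa using this
    have hov : ∀ v (hv : v ≠ X), v ≠ Y → o v = w v hv := by
      intro v hv hvY
      have := ho v
      simp only [setVar, dif_neg hvY, dif_neg hv] at this
      exact this
    have hX := ho X
    simp only [setVar, dif_neg (Ne.symm hYX), dif_pos rfl] at hX
    rw [hX]
    congr 1
    funext Z hZ
    by_cases hZY : Z = Y
    · subst hZY; rw [hoY]
    · rw [hov Z hZ hZY, hw Z hZ hZY]

theorem transGen_chain {V : Type} (E : V → V → Prop) {a b : V}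
    (h : Relation.TransGen E a b) :
    ∃ (k : ℕ) (X : Fin (k + 1) → V), X 0 = a ∧ X (Fin.last k) = b ∧
      ∀ i : Fin k, E (X i.castSucc) (X i.succ) := by
  induction h with
  | single hab =>
    exact ⟨1, ![a, _], rfl, rfl, fun i => by fin_cases i; simpa⟩
  | @tail b c hab hbc ih =>
    obtain ⟨k, X, h0, hl, he⟩ := ih
    refine ⟨k + 1, Fin.snoc X c, ?_, by simp, ?_⟩
    · rw [show (0 : Fin (k + 2)) = Fin.castSucc 0 by rfl, Fin.snoc_castSucc, h0]
    · intro i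
      refine Fin.lastCases ?_ ?_ i
      · rw [Fin.succ_last, Fin.snoc_last, Fin.snoc_castSucc, hl]
        exact hbc
      · intro j
        rw [Fin.succ_castSucc, Fin.snoc_castSucc, Fin.snoc_castSucc]
        exact he j

/-- If a SEM contains a cycle of dependencies among endogenous variables
`V₀, …, V_k` then it falsifies an instance of the recursiveness axiom D6;
consequently, every SEM in which all instances of D6 are valid is acyclic. -/

theorem stmt12 {Ctx V : Type} {R : V → Type} [Fintype V] [DecidableEq V]
    [∀ v, Nonempty (R v)] (M : SEM Ctx V R) :
    (∀ (u : Ctx) (k : ℕ) (Vs : Fin (k + 1) → V),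
      (∀ i : Fin k, ¬ Indep M u (Vs i.succ) (Vs i.castSucc)) →
      ¬ Indep M u (Vs 0) (Vs (Fin.last k)) →
      (∀ i : Fin k, Affects (fun u I => M.outcomes u I) u (Vs i.castSucc) (Vs i.succ)) ∧
        Affects (fun u I => M.outcomes u I) u (Vs (Fin.last k)) (Vs 0)) ∧
    (D6holds (fun u I => M.outcomes u I) → M.Acyclic) := by
  constructor
  · intro u k Vs hchain hlast
    exact ⟨fun i => affects_of_not_indep M u _ _ (hchain i),
      affects_of_not_indep M u _ _ hlast⟩
  · intro hD6 u
    set E : V → V → Prop := Affects (fun u I => M.outcomes u I) u with hE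
    have hnc : ∀ a b, Relation.TransGen E a b → ¬ E b a := by
      intro a b hab hba
      obtain ⟨k, X, h0, hl, he⟩ := transGen_chain E hab
      exact hD6 u k X he (by rw [hl, h0]; exact hba)
    have hirr : ∀ a, ¬ Relation.TransGen E a a := by
      intro a ha
      rcases (Relation.transGen_iff E a a).mp ha with h | ⟨c, hac, hca⟩
      · exact hD6 u 0 (fun _ => a) (fun i => i.elim0) h
      · exact hnc a c hac hca
    let le : V → V → Prop := fun a b => a = b ∨ Relation.TransGen E a b
    have hpo : IsPartialOrder V le := by
      refine { refl := fun a => Or.inl rfl, trans := ?_, antisymm := ?_ }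
      · rintro a b c (rfl | hab) (rfl | hbc)
        · exact Or.inl rfl
        · exact Or.inr hbc
        · exact Or.inr hab
        · exact Or.inr (hab.trans hbc)
      · rintro a b (rfl | hab) hba
        · rfl
        rcases hba with rfl | hba
        · rfl
        · exact absurd (hab.trans hba) (hirr a)
    obtain ⟨s, hs, hles⟩ := @extend_partialOrder V le hpo
    refine ⟨fun a b => s a b ∧ a ≠ b,
      { trichotomous := ?_, irrefl := ?_, trans := ?_ }, ?_⟩
    · intro a b
      by_cases hab : a = b
      · exact fun _ _ => hab
      · rcases hs.total a b with h | h
        · exact fun h1 _ => (h1 ⟨h, hab⟩).elim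
        · exact fun _ h2 => (h2 ⟨h, Ne.symm hab⟩).elim
    · intro a ha
      exact ha.2 rfl
    · rintro a b c ⟨hab, hne⟩ ⟨hbc, hne'⟩
      refine ⟨hs.trans a b c hab hbc, ?_⟩
      rintro rfl
      exact hne (hs.antisymm a b hab hbc)
    · rintro X Y ⟨hsXY, hne⟩
      by_contra hdep
      have hEYX : E Y X := affects_of_not_indep M u X Y hdep
      have : s Y X := hles Y X (Or.inr (Relation.TransGen.single hEYX))
      exact hne (hs.antisymm X Y hsXY this)
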